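/- Let b, e, k₂, k₃, k₄ be real numbers with 0 < b < e and k₂, k₃, k₄ > 0. Then for every v > 0 the cubic equation (e·(1 + k₄²)/(e − b))·v·w·(w − v) + (e/(e − b) + k₄²)·w·(w − v) + (1 + k₂² + k₃²)·(v + 1)·(w − v) − k₂²·k₃²·v·(v + 1) = 0 admits exactly one solution w with w > v. -/
import Mathlib


/-- For `0 < b < e` and `k₂, k₃, k₄ > 0`, for every `v > 0` the cubic
equation
`(e(1+k₄²)/(e−b))·v·w·(w−v) + (e/(e−b)+k₄²)·w·(w−v) + (1+k₂²+k₃²)·(v+1)·(w−v)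
  − k₂²k₃²·v·(v+1) = 0`
admits exactly one solution `w > v`. -/
theorem cubic_unique_solution_gt (b e k₂ k₃ k₄ : ℝ)
    (hb : 0 < b) (hbe : b < e) (hk₂ : 0 < k₂) (hk₃ : 0 < k₃) (hk₄ : 0 < k₄) :
    ∀ v : ℝ, 0 < v → ∃! w : ℝ, v < w ∧
      e * (1 + k₄ ^ 2) / (e - b) * v * w * (w - v) + (e / (e - b) + k₄ ^ 2) * w * (w - v) +
        (1 + k₂ ^ 2 + k₃ ^ 2) * (v + 1) * (w - v) - k₂ ^ 2 * k₃ ^ 2 * v * (v + 1) = 0 := by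
  intro v hv
  have heb : (0:ℝ) < e - b := by linarith
  have he : (0:ℝ) < e := by linarith
  have hA : 0 < e * (1 + k₄ ^ 2) / (e - b) := by positivity
  have hB : 0 < e / (e - b) + k₄ ^ 2 := by positivity
  have hC : (0:ℝ) < 1 + k₂ ^ 2 + k₃ ^ 2 := by positivity
  have hD : 0 < k₂ ^ 2 * k₃ ^ 2 * v * (v + 1) := by positivity
  set A := e * (1 + k₄ ^ 2) / (e - b) with hAdef
  set B := e / (e - b) + k₄ ^ 2 with hBdef
  set C := (1:ℝ) + k₂ ^ 2 + k₃ ^ 2 with hCdef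
  set D := k₂ ^ 2 * k₃ ^ 2 * v * (v + 1) with hDdef
  set f : ℝ → ℝ := fun w =>
    A * v * w * (w - v) + B * w * (w - v) + C * (v + 1) * (w - v) - D with hf
  have hmono : ∀ w1 w2 : ℝ, v < w1 → w1 < w2 → f w1 < f w2 := by
    intro w1 w2 h1 h2
    simp only [hf]
    nlinarith [mul_pos (mul_pos hA hv) (mul_pos (sub_pos.2 h2) (by linarith : (0:ℝ) < w1 + w2 - v)),
      mul_pos hB (mul_pos (sub_pos.2 h2) (by linarith : (0:ℝ) < w1 + w2 - v)),
      mul_pos (mul_pos hC (by linarith : (0:ℝ) < v + 1)) (sub_pos.2 h2)]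
  have hCv : (0:ℝ) < C * (v + 1) := by positivity
  set w₀ : ℝ := v + D / (C * (v + 1)) + 1 with hw₀def
  have hvw₀ : v < w₀ := by
    have : 0 < D / (C * (v + 1)) := div_pos hD hCv
    simp only [hw₀def]; linarith
  have hfv : f v = -D := by simp only [hf]; ring
  have hkey : C * (v + 1) * (w₀ - v) = D + C * (v + 1) := by
    simp only [hw₀def]
    field_simp
    ring
  have hfw₀ : 0 < f w₀ := by
    simp only [hf]
    nlinarith [mul_pos (mul_pos hA hv) (mul_pos (lt_trans hv hvw₀) (sub_pos.2 hvw₀)),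
      mul_pos hB (mul_pos (lt_trans hv hvw₀) (sub_pos.2 hvw₀)), hkey, hCv]
  have hcont : ContinuousOn f (Set.Icc v w₀) := by
    apply Continuous.continuousOn; simp only [hf]; fun_prop
  have hmem : (0:ℝ) ∈ Set.Icc (f v) (f w₀) := ⟨by rw [hfv]; linarith, le_of_lt hfw₀⟩
  obtain ⟨w, hwI, hwz⟩ := intermediate_value_Icc (le_of_lt hvw₀) hcont hmem
  have hvw : v < w := by
    rcases lt_or_eq_of_le hwI.1 with h | h
    · exact h
    · exfalso; rw [← h, hfv] at hwz; linarith
  refine ⟨w, ⟨hvw, hwz⟩, ?_⟩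
  rintro y ⟨hy, hyz⟩
  have hyz' : f y = 0 := hyz
  rcases lt_trichotomy y w with h | h | h
  · have := hmono y w hy h; rw [hyz', hwz] at this; linarith
  · exact h
  · have := hmono w y hvw h; rw [hyz', hwz] at this; linarith
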